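/- Let k be a field and A ∈ ASM(n). Then X_A is cut out by the essential rank conditions alone: X_A = {M ∈ Mat_n(k) : rank(M_{[i],[j]}) ≤ r_A(i,j) for all (i,j) ∈ Ess(A)}; that is, a matrix M satisfies rank(M_{[i],[j]}) ≤ r_A(i,j) for all 1 ≤ i,j ≤ n if and only if it satisfies these inequalities for all (i,j) ∈ Ess(A). -/

import Mathlib

/-- The entry of an `n × n` integer matrix in 1-based coordinates;
`0` outside the grid `[1,n] × [1,n]`. -/
def entry1 {n : ℕ} (A : Matrix (Fin n) (Fin n) ℤ) (i j : ℕ) : ℤ :=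
  if h : 1 ≤ i ∧ i ≤ n ∧ 1 ≤ j ∧ j ≤ n then
    A ⟨i - 1, by omega⟩ ⟨j - 1, by omega⟩ else 0

/-- The corner sum `r_A(i,j) = ∑_{k ≤ i} ∑_{l ≤ j} a_{k l}` (1-based). -/
def cornerSum {n : ℕ} (A : Matrix (Fin n) (Fin n) ℤ) (i j : ℕ) : ℤ :=
  ∑ k ∈ Finset.Icc 1 i, ∑ l ∈ Finset.Icc 1 j, entry1 A k l

/-- Partial row sum `∑_{l=1}^{j} a_{i l}`. -/
def rowPartial {n : ℕ} (A : Matrix (Fin n) (Fin n) ℤ) (i j : ℕ) : ℤ :=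
  ∑ l ∈ Finset.Icc 1 j, entry1 A i l

/-- Partial column sum `∑_{k=1}^{i} a_{k j}`. -/
def colPartial {n : ℕ} (A : Matrix (Fin n) (Fin n) ℤ) (i j : ℕ) : ℤ :=
  ∑ k ∈ Finset.Icc 1 i, entry1 A k j

/-- `A` is an alternating sign matrix: every partial row and column sum is `0`
or `1`, and every full row and column sums to `1`. -/
def IsASM {n : ℕ} (A : Matrix (Fin n) (Fin n) ℤ) : Prop :=
  (∀ i j : ℕ, rowPartial A i j = 0 ∨ rowPartial A i j = 1) ∧
  (∀ i j : ℕ, colPartial A i j = 0 ∨ colPartial A i j = 1) ∧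
  (∀ i : ℕ, 1 ≤ i → i ≤ n → rowPartial A i n = 1) ∧
  (∀ j : ℕ, 1 ≤ j → j ≤ n → colPartial A n j = 1)

/-- `A` is a partial alternating sign matrix: every partial row and column sum
is `0` or `1`. -/
def IsPartialASM {n : ℕ} (A : Matrix (Fin n) (Fin n) ℤ) : Prop :=
  (∀ i j : ℕ, rowPartial A i j = 0 ∨ rowPartial A i j = 1) ∧
  (∀ i j : ℕ, colPartial A i j = 0 ∨ colPartial A i j = 1)

/-- `(i,j)` (1-based) is in the Rothe diagram `D(A)`:
`∑_{k > i, l > j} a_{i l} a_{k j} = 1`. -/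
def InDiagram {n : ℕ} (A : Matrix (Fin n) (Fin n) ℤ) (i j : ℕ) : Prop :=
  (∑ k ∈ Finset.Icc 1 n, ∑ l ∈ Finset.Icc 1 n,
    (if i < k ∧ j < l then entry1 A i l * entry1 A k j else 0)) = 1

/-- `(i,j)` is in the essential set `Ess(A)`. -/
def InEss {n : ℕ} (A : Matrix (Fin n) (Fin n) ℤ) (i j : ℕ) : Prop :=
  InDiagram A i j ∧ ¬ InDiagram A (i + 1) j ∧ ¬ InDiagram A i (j + 1)

/-- The permutation matrix of `w` (a `1` in positions `(a, w a)`). -/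
def permMatrix {n : ℕ} (w : Equiv.Perm (Fin n)) : Matrix (Fin n) (Fin n) ℤ :=
  Matrix.of fun a b => if w a = b then 1 else 0

/-- The value `w(a)` of the permutation `w` in 1-based coordinates, extended by
the identity outside `[1,n]`. -/
def pval {n : ℕ} (w : Equiv.Perm (Fin n)) (a : ℕ) : ℕ :=
  if h : 1 ≤ a ∧ a ≤ n then ((w ⟨a - 1, by omega⟩ : Fin n) : ℕ) + 1 else a

/-- The value function (1-based) of the biGrassmannian permutation `[i,j,r]_b`. -/
def biGrFun (i j r a : ℕ) : ℕ :=
  if a ≤ r then a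
  else if a ≤ i then a + (j - r)
  else if a ≤ i + j - r then a - (i - r)
  else a

/-- The permutation matrix of the biGrassmannian permutation `[i,j,r]_b ∈ S_n`. -/
def biGrMatrix (n i j r : ℕ) : Matrix (Fin n) (Fin n) ℤ :=
  Matrix.of fun a b => if biGrFun i j r ((a : ℕ) + 1) = (b : ℕ) + 1 then 1 else 0

/-- `u ∈ S_n` is the biGrassmannian permutation `[i,j,r]_b`, i.e. its values
are given by the defining formula. -/
def IsBiGrPerm (n i j r : ℕ) (u : Equiv.Perm (Fin n)) : Prop :=
  ∀ a : ℕ, 1 ≤ a → a ≤ n → pval u a = biGrFun i j r a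

/-- `(a,b)` (1-based) is in the Rothe diagram of the permutation `w`:
`w(a) > b` and `w⁻¹(b) > a`. -/
def InPermDiagram {n : ℕ} (w : Equiv.Perm (Fin n)) (a b : ℕ) : Prop :=
  1 ≤ a ∧ a ≤ n ∧ 1 ≤ b ∧ b ≤ n ∧ b < pval w a ∧ a < pval w⁻¹ b

/-- `(a,b)` is in the essential set of the permutation `w`. -/
def InPermEss {n : ℕ} (w : Equiv.Perm (Fin n)) (a b : ℕ) : Prop :=
  InPermDiagram w a b ∧ ¬ InPermDiagram w (a + 1) b ∧ ¬ InPermDiagram w a (b + 1)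

/-- `w` has a descent at (1-based) position `d`: `w(d) > w(d+1)`. -/
def HasDescentAt {n : ℕ} (w : Equiv.Perm (Fin n)) (d : ℕ) : Prop :=
  1 ≤ d ∧ d < n ∧ pval w (d + 1) < pval w d

/-- `u` is biGrassmannian: both `u` and `u⁻¹` have a unique descent. -/
def IsBiGrassmannian {n : ℕ} (u : Equiv.Perm (Fin n)) : Prop :=
  (∃! d : ℕ, HasDescentAt u d) ∧ (∃! d : ℕ, HasDescentAt u⁻¹ d)



open Finset Matrix Module

section RankAux
variable {K : Type*} [Field K]

lemma rankRowSub {i i' j : ℕ} (B : Matrix (Fin i') (Fin j) K) (f : Fin i → Fin i') :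
    (B.submatrix f id).rank ≤ B.rank := by
  rw [Matrix.rank_eq_finrank_span_row, Matrix.rank_eq_finrank_span_row]
  apply Submodule.finrank_mono
  apply Submodule.span_mono
  rintro _ ⟨a, rfl⟩
  exact ⟨f a, rfl⟩

lemma rankRowAdd {m j : ℕ} (B : Matrix (Fin (m+1)) (Fin j) K) :
    B.rank ≤ (B.submatrix Fin.castSucc id).rank + 1 := by
  rw [Matrix.rank_eq_finrank_span_row, Matrix.rank_eq_finrank_span_row]
  have h1 : Set.range B ⊆
      Set.range (B.submatrix Fin.castSucc id) ∪ {B (Fin.last m)} := by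
    rintro _ ⟨a, rfl⟩
    rcases Fin.eq_castSucc_or_eq_last a with ⟨b, rfl⟩ | rfl
    · exact Or.inl ⟨b, rfl⟩
    · exact Or.inr rfl
  calc finrank K (Submodule.span K (Set.range B))
      ≤ finrank K ((Submodule.span K (Set.range (B.submatrix Fin.castSucc id)) ⊔
          Submodule.span K ({B (Fin.last m)} : Set (Fin j → K)) : Submodule K (Fin j → K))) := by
        apply Submodule.finrank_mono
        rw [← Submodule.span_union]
        exact Submodule.span_mono h1
    _ ≤ finrank K (Submodule.span K (Set.range (B.submatrix Fin.castSucc id))) +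
          finrank K (Submodule.span K ({B (Fin.last m)} : Set (Fin j → K))) :=
        Submodule.finrank_add_le_finrank_add_finrank _ _
    _ ≤ finrank K (Submodule.span K (Set.range (B.submatrix Fin.castSucc id))) + 1 := by
        gcongr
        calc finrank K (Submodule.span K ({B (Fin.last m)} : Set (Fin j → K)))
            ≤ ({B (Fin.last m)} : Set (Fin j → K)).toFinset.card :=
              finrank_span_le_card _
          _ ≤ 1 := by simp

lemma rankColSub {i j j' : ℕ} (B : Matrix (Fin i) (Fin j') K) (g : Fin j → Fin j') :
    (B.submatrix id g).rank ≤ B.rank := by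
  rw [← Matrix.rank_transpose (B.submatrix id g), ← Matrix.rank_transpose B,
    Matrix.transpose_submatrix]
  exact rankRowSub Bᵀ g

lemma rankColAdd {i m : ℕ} (B : Matrix (Fin i) (Fin (m+1)) K) :
    B.rank ≤ (B.submatrix id Fin.castSucc).rank + 1 := by
  calc B.rank = Bᵀ.rank := (Matrix.rank_transpose B).symm
    _ ≤ (Bᵀ.submatrix Fin.castSucc id).rank + 1 := rankRowAdd _
    _ = (B.submatrix id Fin.castSucc).rank + 1 := by
        rw [← Matrix.transpose_submatrix, Matrix.rank_transpose]

end RankAux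

section Comb
variable {n : ℕ} {A : Matrix (Fin n) (Fin n) ℤ}

lemma sum_filter_gt (x : ℕ → ℤ) {j n : ℕ} (hj : j ≤ n) :
    ∑ l ∈ Finset.Icc 1 n, (if j < l then x l else 0)
      = (∑ l ∈ Finset.Icc 1 n, x l) - ∑ l ∈ Finset.Icc 1 j, x l := by
  rw [← Finset.sum_filter]
  have h1 : (Finset.Icc 1 n).filter (fun l => j < l) = Finset.Ioc j n := by
    ext l; simp only [Finset.mem_filter, Finset.mem_Icc, Finset.mem_Ioc]; omega
  have h2 : Finset.Icc 1 n = Finset.Icc 1 j ∪ Finset.Ioc j n := by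
    ext l; simp only [Finset.mem_union, Finset.mem_Icc, Finset.mem_Ioc]; omega
  have h3 : Disjoint (Finset.Icc 1 j) (Finset.Ioc j n) := by
    rw [Finset.disjoint_left]; intro a ha hb
    simp only [Finset.mem_Icc] at ha; simp only [Finset.mem_Ioc] at hb; omega
  rw [h1, h2, Finset.sum_union h3]; ring

lemma diagram_iff (hA : IsASM A) {i j : ℕ}
    (h1i : 1 ≤ i) (hin : i ≤ n) (h1j : 1 ≤ j) (hjn : j ≤ n) :
    InDiagram A i j ↔ (rowPartial A i j = 0 ∧ colPartial A i j = 0) := by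
  have hkey : (∑ k ∈ Finset.Icc 1 n, ∑ l ∈ Finset.Icc 1 n,
      (if i < k ∧ j < l then entry1 A i l * entry1 A k j else 0))
      = (1 - rowPartial A i j) * (1 - colPartial A i j) := by
    have step1 : (∑ k ∈ Finset.Icc 1 n, ∑ l ∈ Finset.Icc 1 n,
        (if i < k ∧ j < l then entry1 A i l * entry1 A k j else 0))
        = (∑ k ∈ Finset.Icc 1 n, (if i < k then entry1 A k j else 0)) *
          (∑ l ∈ Finset.Icc 1 n, (if j < l then entry1 A i l else 0)) := by
      rw [Finset.sum_mul_sum]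
      refine Finset.sum_congr rfl fun k _ => Finset.sum_congr rfl fun l _ => ?_
      split_ifs <;> (first | ring1 | (exfalso; omega))
    rw [step1, sum_filter_gt _ hin, sum_filter_gt _ hjn]
    have hc1 : (∑ k ∈ Finset.Icc 1 n, entry1 A k j) = 1 := hA.2.2.2 j h1j hjn
    have hr1 : (∑ l ∈ Finset.Icc 1 n, entry1 A i l) = 1 := hA.2.2.1 i h1i hin
    rw [hc1, hr1]
    unfold rowPartial colPartial
    ring
  unfold InDiagram
  rw [hkey]
  rcases hA.1 i j with h | h <;> rcases hA.2.1 i j with h' | h' <;>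
    rw [h, h'] <;> norm_num

lemma indiag_bounds {i j : ℕ} (h : InDiagram A i j) :
    1 ≤ i ∧ i ≤ n ∧ 1 ≤ j ∧ j ≤ n := by
  by_contra hc
  unfold InDiagram at h
  have hz : (∑ k ∈ Finset.Icc 1 n, ∑ l ∈ Finset.Icc 1 n,
      (if i < k ∧ j < l then entry1 A i l * entry1 A k j else 0)) = 0 := by
    refine Finset.sum_eq_zero fun k _ => Finset.sum_eq_zero fun l _ => ?_
    split_ifs with hkl
    · by_cases hib : 1 ≤ i ∧ i ≤ n
      · have hjb : ¬(1 ≤ j ∧ j ≤ n) := by tauto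
        have : entry1 A k j = 0 := by unfold entry1; rw [dif_neg (by tauto)]
        rw [this, mul_zero]
      · have : entry1 A i l = 0 := by unfold entry1; rw [dif_neg (by tauto)]
        rw [this, zero_mul]
    · rfl
  rw [hz] at h
  exact absurd h (by norm_num)

lemma cornerSum_succ_row (A : Matrix (Fin n) (Fin n) ℤ) (m j : ℕ) :
    cornerSum A (m + 1) j = cornerSum A m j + rowPartial A (m + 1) j := by
  unfold cornerSum
  rw [Finset.sum_Icc_succ_top (by omega)]
  rfl

lemma cornerSum_swap (A : Matrix (Fin n) (Fin n) ℤ) (i j : ℕ) :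
    cornerSum A i j = ∑ l ∈ Finset.Icc 1 j, colPartial A i l := by
  unfold cornerSum colPartial
  exact Finset.sum_comm

lemma cornerSum_succ_col (A : Matrix (Fin n) (Fin n) ℤ) (i m : ℕ) :
    cornerSum A i (m + 1) = cornerSum A i m + colPartial A i (m + 1) := by
  rw [cornerSum_swap, cornerSum_swap, Finset.sum_Icc_succ_top (by omega)]

lemma cornerSum_one_row (A : Matrix (Fin n) (Fin n) ℤ) (j : ℕ) :
    cornerSum A 1 j = rowPartial A 1 j := by
  unfold cornerSum
  rw [show (Finset.Icc 1 1 : Finset ℕ) = {1} from Finset.Icc_self 1, Finset.sum_singleton]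
  rfl

lemma cornerSum_one_col (A : Matrix (Fin n) (Fin n) ℤ) (i : ℕ) :
    cornerSum A i 1 = colPartial A i 1 := by
  rw [cornerSum_swap,
    show (Finset.Icc 1 1 : Finset ℕ) = {1} from Finset.Icc_self 1, Finset.sum_singleton]

end Comb

lemma keyLemma {K : Type*} [Field K] {n : ℕ} {A : Matrix (Fin n) (Fin n) ℤ} (hA : IsASM A)
    (M : Matrix (Fin n) (Fin n) K)
    (hess : ∀ (i j : ℕ) (hi : i ≤ n) (hj : j ≤ n), InEss A i j →
      ((M.submatrix (Fin.castLE hi) (Fin.castLE hj)).rank : ℤ) ≤ cornerSum A i j) :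
    ∀ (N i j : ℕ) (hi : i ≤ n) (hj : j ≤ n), 1 ≤ i → 1 ≤ j →
      (InDiagram A i j → 2*n+2-(i+j) < N) → (¬ InDiagram A i j → 2*n+2+(i+j) < N) →
      ((M.submatrix (Fin.castLE hi) (Fin.castLE hj)).rank : ℤ) ≤ cornerSum A i j := by
  intro N
  induction N with
  | zero =>
    intro i j hi hj h1i h1j hN1 hN2
    exfalso
    by_cases hD : InDiagram A i j
    · exact absurd (hN1 hD) (by omega)
    · exact absurd (hN2 hD) (by omega)
  | succ N ih =>
    intro i j hi hj h1i h1j hN1 hN2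
    by_cases hD : InDiagram A i j
    · obtain ⟨hrp, hcp⟩ := (diagram_iff hA h1i hi h1j hj).mp hD
      have hin' : i < n := by
        rcases Nat.lt_or_ge i n with h | h
        · exact h
        · exfalso
          have hieq : i = n := by omega
          subst hieq
          have := hA.2.2.2 j h1j hj
          omega
      have hjn' : j < n := by
        rcases Nat.lt_or_ge j n with h | h
        · exact h
        · exfalso
          have hjeq : j = n := by omega
          subst hjeq
          have := hA.2.2.1 i h1i hi
          omega
      by_cases hE : InEss A i j
      · exact hess i j hi hj hE
      · have hor : InDiagram A (i+1) j ∨ InDiagram A i (j+1) := by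
          unfold InEss at hE; tauto
        have hNbound := hN1 hD
        rcases hor with hD' | hD'
        · have hi1 : i + 1 ≤ n := hin'
          have hr1 : rowPartial A (i+1) j = 0 :=
            ((diagram_iff hA (by omega) hi1 h1j hj).mp hD').1
          have hcs : cornerSum A (i+1) j = cornerSum A i j := by
            rw [cornerSum_succ_row, hr1, add_zero]
          have hsub : M.submatrix (Fin.castLE hi) (Fin.castLE hj)
              = (M.submatrix (Fin.castLE hi1) (Fin.castLE hj)).submatrix
                  (Fin.castLE (Nat.le_succ i)) id := rfl
          have hle : (M.submatrix (Fin.castLE hi) (Fin.castLE hj)).rank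
              ≤ (M.submatrix (Fin.castLE hi1) (Fin.castLE hj)).rank := by
            rw [hsub]; exact rankRowSub _ _
          have hIH := ih (i+1) j hi1 hj (by omega) h1j
            (fun _ => by omega) (fun hc => absurd hD' hc)
          rw [← hcs]
          exact le_trans (by exact_mod_cast hle) hIH
        · have hj1 : j + 1 ≤ n := hjn'
          have hc1 : colPartial A i (j+1) = 0 :=
            ((diagram_iff hA h1i hi (by omega) hj1).mp hD').2
          have hcs : cornerSum A i (j+1) = cornerSum A i j := by
            rw [cornerSum_succ_col, hc1, add_zero]
          have hsub : M.submatrix (Fin.castLE hi) (Fin.castLE hj)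
              = (M.submatrix (Fin.castLE hi) (Fin.castLE hj1)).submatrix
                  id (Fin.castLE (Nat.le_succ j)) := rfl
          have hle : (M.submatrix (Fin.castLE hi) (Fin.castLE hj)).rank
              ≤ (M.submatrix (Fin.castLE hi) (Fin.castLE hj1)).rank := by
            rw [hsub]; exact rankColSub _ _
          have hIH := ih i (j+1) hi hj1 h1i (by omega)
            (fun _ => by omega) (fun hc => absurd hD' hc)
          rw [← hcs]
          exact le_trans (by exact_mod_cast hle) hIH
    · have hrc : rowPartial A i j = 1 ∨ colPartial A i j = 1 := by
        rcases hA.1 i j with h | h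
        · rcases hA.2.1 i j with h' | h'
          · exact absurd ((diagram_iff hA h1i hi h1j hj).mpr ⟨h, h'⟩) hD
          · exact Or.inr h'
        · exact Or.inl h
      have hNbound := hN2 hD
      rcases hrc with hr | hc
      · obtain ⟨m, rfl⟩ : ∃ m, i = m + 1 := ⟨i - 1, by omega⟩
        have hcs : cornerSum A (m+1) j = cornerSum A m j + 1 := by
          rw [cornerSum_succ_row, hr]
        rcases Nat.eq_zero_or_pos m with rfl | hm
        · have hrk : (M.submatrix (Fin.castLE hi) (Fin.castLE hj)).rank ≤ 1 := by
            simpa using Matrix.rank_le_card_height (M.submatrix (Fin.castLE hi) (Fin.castLE hj))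
          calc ((M.submatrix (Fin.castLE hi) (Fin.castLE hj)).rank : ℤ)
              ≤ 1 := by exact_mod_cast hrk
            _ ≤ cornerSum A (0+1) j := by
                have h1 : cornerSum A 1 j = 1 := by rw [cornerSum_one_row]; exact hr
                exact le_of_eq h1.symm
        · have hm' : m ≤ n := by omega
          have hsub : (M.submatrix (Fin.castLE hi) (Fin.castLE hj)).submatrix Fin.castSucc id
              = M.submatrix (Fin.castLE hm') (Fin.castLE hj) := rfl
          have hle : (M.submatrix (Fin.castLE hi) (Fin.castLE hj)).rank
              ≤ (M.submatrix (Fin.castLE hm') (Fin.castLE hj)).rank + 1 := by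
            rw [← hsub]; exact rankRowAdd _
          have hIH := ih m j hm' hj hm h1j (fun _ => by omega) (fun _ => by omega)
          rw [hcs]
          calc ((M.submatrix (Fin.castLE hi) (Fin.castLE hj)).rank : ℤ)
              ≤ ((M.submatrix (Fin.castLE hm') (Fin.castLE hj)).rank : ℤ) + 1 := by
                exact_mod_cast hle
            _ ≤ cornerSum A m j + 1 := add_le_add_left hIH 1
      · obtain ⟨m, rfl⟩ : ∃ m, j = m + 1 := ⟨j - 1, by omega⟩
        have hcs : cornerSum A i (m+1) = cornerSum A i m + 1 := by
          rw [cornerSum_succ_col, hc]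
        rcases Nat.eq_zero_or_pos m with rfl | hm
        · have hrk : (M.submatrix (Fin.castLE hi) (Fin.castLE hj)).rank ≤ 1 := by
            simpa using Matrix.rank_le_card_width (M.submatrix (Fin.castLE hi) (Fin.castLE hj))
          calc ((M.submatrix (Fin.castLE hi) (Fin.castLE hj)).rank : ℤ)
              ≤ 1 := by exact_mod_cast hrk
            _ ≤ cornerSum A i (0+1) := by
                have h1 : cornerSum A i 1 = 1 := by rw [cornerSum_one_col]; exact hc
                exact le_of_eq h1.symm
        · have hm' : m ≤ n := by omega
          have hsub : (M.submatrix (Fin.castLE hi) (Fin.castLE hj)).submatrix id Fin.castSucc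
              = M.submatrix (Fin.castLE hi) (Fin.castLE hm') := rfl
          have hle : (M.submatrix (Fin.castLE hi) (Fin.castLE hj)).rank
              ≤ (M.submatrix (Fin.castLE hi) (Fin.castLE hm')).rank + 1 := by
            rw [← hsub]; exact rankColAdd _
          have hIH := ih i m hi hm' h1i hm (fun _ => by omega) (fun _ => by omega)
          rw [hcs]
          calc ((M.submatrix (Fin.castLE hi) (Fin.castLE hj)).rank : ℤ)
              ≤ ((M.submatrix (Fin.castLE hi) (Fin.castLE hm')).rank : ℤ) + 1 := by
                exact_mod_cast hle
            _ ≤ cornerSum A i m + 1 := add_le_add_left hIH 1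

/-- For a field `K` and `A ∈ ASM(n)`, the ASM variety `X_A` is
cut out by the essential rank conditions alone: a matrix `M` satisfies
`rank M_{[i],[j]} ≤ r_A(i,j)` for all `1 ≤ i,j ≤ n` iff it satisfies these
inequalities for all `(i,j) ∈ Ess(A)`. -/
theorem stmt17 {K : Type*} [Field K] {n : ℕ}
    (A : Matrix (Fin n) (Fin n) ℤ) (hA : IsASM A)
    (M : Matrix (Fin n) (Fin n) K) :
    (∀ (i j : ℕ) (hi : i ≤ n) (hj : j ≤ n), 1 ≤ i → 1 ≤ j →
      ((M.submatrix (Fin.castLE hi) (Fin.castLE hj)).rank : ℤ) ≤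
        cornerSum A i j) ↔
    (∀ (i j : ℕ) (hi : i ≤ n) (hj : j ≤ n), InEss A i j →
      ((M.submatrix (Fin.castLE hi) (Fin.castLE hj)).rank : ℤ) ≤
        cornerSum A i j) := by
  
  constructor
  · intro h i j hi hj hE
    obtain ⟨h1i, _, h1j, _⟩ := indiag_bounds hE.1
    exact h i j hi hj h1i h1j
  · intro h i j hi hj h1i h1j
    exact keyLemma hA M h (2*n+3+i+j) i j hi hj h1i h1j
      (fun _ => by omega) (fun _ => by omega)
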